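/- In any pure-strategy Nash equilibrium of the k-price auction with 3 ≤ k ≤ n, the winning agent i satisfies v_i > v_{n−(k−3)}; in particular, an agent with valuation exactly v_{n−(k−3)} or lower can never win in equilibrium. -/

import Mathlib

open Classical

/-- The k-th highest bid (k counted from 1). -/
noncomputable def kthHighest {n : ℕ} (b : Fin n → ℝ) (k : ℕ) : ℝ :=
  ((List.ofFn b).mergeSort (fun x y => decide (y ≤ x))).getD (k - 1) 0

/-- Agent `i` wins: her bid is highest, with ties broken toward the
agent with the highest valuation, i.e. (for strictly decreasing valuations)
the lowest index among the maximal bidders. -/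
def wins {n : ℕ} (b : Fin n → ℝ) (i : Fin n) : Prop :=
  (∀ j, b j ≤ b i) ∧ ∀ j, b j = b i → i ≤ j

/-- The price paid by the winner in the k-price auction (2 ≤ k ≤ n), or in the
first-price auction (the case k = n+1), where the winner pays the highest bid. -/
noncomputable def price {n : ℕ} (k : ℕ) (b : Fin n → ℝ) : ℝ :=
  if k = n + 1 then kthHighest b 1 else kthHighest b k

/-- The winner gets her valuation minus the price; losers get 0. -/
noncomputable def utility {n : ℕ} (v : Fin n → ℝ) (k : ℕ) (b : Fin n → ℝ)
    (i : Fin n) : ℝ :=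
  if wins b i then v i - price k b else 0

/-- Pure-strategy Nash equilibrium with nonnegative bids: no agent can strictly
improve her utility by a unilateral deviation to another nonnegative bid. -/
def NashEq {n : ℕ} (v : Fin n → ℝ) (k : ℕ) (b : Fin n → ℝ) : Prop :=
  (∀ i, 0 ≤ b i) ∧
  ∀ i : Fin n, ∀ b' : ℝ, 0 ≤ b' →
    utility v k (Function.update b i b') i ≤ utility v k b i

/-- One-based valuation indexing, with the convention `v_{n+1} = 0`. -/
noncomputable def vIdx {n : ℕ} (v : Fin n → ℝ) (j : ℕ) : ℝ :=
  if h : 1 ≤ j ∧ j ≤ n then v ⟨j - 1, by omega⟩ else 0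


open List Finset

theorem countP_ofFn' (n : ℕ) (b : Fin n → ℝ) (q : ℝ → Bool) :
    (List.ofFn b).countP q = (Finset.univ.filter (fun j => q (b j))).card := by
  classical
  rw [List.ofFn_eq_map, List.countP_map]
  rw [Finset.card_def, Finset.filter_val, ← Multiset.countP_eq_card_filter]
  rw [show (Finset.univ : Finset (Fin n)).val = ((List.finRange n : List (Fin n)) : Multiset (Fin n)) from rfl]
  rw [Multiset.coe_countP]
  rw [List.countP_eq_length_filter, List.countP_eq_length_filter]
  congr 1
  apply List.filter_congr
  intro x _; simp [Function.comp]

theorem sorted_desc_getElem (s : List ℝ) (hs : s.Pairwise (fun x y => y ≤ x)) {i j : ℕ}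
    (hij : i ≤ j) (hj : j < s.length) : s[j] ≤ s[i] := by
  rcases eq_or_lt_of_le hij with rfl | h
  · exact le_refl _
  · have := hs.rel_get_of_lt (a := ⟨i, lt_of_le_of_lt hij hj⟩) (b := ⟨j, hj⟩) h
    simpa using this

theorem countP_ge_of_prefix (s : List ℝ) (q : ℝ → Bool) (k : ℕ) (hk : k ≤ s.length)
    (h : ∀ i (h2 : i < s.length), i < k → q s[i] = true) : k ≤ s.countP q := by
  have hlen : (s.take k).length = k := by simp [List.length_take]; omega
  have hall : ∀ a ∈ s.take k, q a = true := by
    intro a ha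
    obtain ⟨i, hi, rfl⟩ := List.getElem_of_mem ha
    have hik : i < k := by rw [hlen] at hi; exact hi
    have his : i < s.length := lt_of_lt_of_le hik hk
    have : (s.take k)[i] = s[i] := List.getElem_take
    rw [this]
    exact h i his hik
  calc k = (s.take k).length := hlen.symm
    _ = (s.take k).countP q := (List.countP_eq_length.mpr hall).symm
    _ ≤ s.countP q := (List.take_sublist k s).countP_le

theorem countP_le_of_suffix (s : List ℝ) (q : ℝ → Bool) (k : ℕ)
    (h : ∀ i (h2 : i < s.length), k ≤ i → q s[i] = false) : s.countP q ≤ k := by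
  have hsplit : s.countP q = (s.take k).countP q + (s.drop k).countP q := by
    conv_lhs => rw [← List.take_append_drop k s]
    exact List.countP_append
  have hdrop : (s.drop k).countP q = 0 := by
    rw [List.countP_eq_zero]
    intro a ha
    obtain ⟨i, hi, rfl⟩ := List.getElem_of_mem ha
    rw [List.getElem_drop]
    exact ne_of_eq_of_ne (h _ (by simp at hi ⊢; omega) (by omega)) (by simp)
  have htake : (s.take k).countP q ≤ k := le_trans List.countP_le_length (by simp)
  omega


section KH
variable {n k : ℕ} (b : Fin n → ℝ)

theorem sL_props : ∃ s : List ℝ, s = (List.ofFn b).mergeSort (fun x y => decide (y ≤ x)) ∧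
    s ~ List.ofFn b ∧ s.Pairwise (fun x y : ℝ => y ≤ x) ∧ s.length = n := by
  refine ⟨_, rfl, List.mergeSort_perm _ _, ?_, by rw [(List.mergeSort_perm _ _).length_eq, List.length_ofFn]⟩
  have := List.pairwise_mergeSort (le := fun x y : ℝ => decide (y ≤ x))
    (fun a b c h₁ h₂ => by simp at *; linarith)
    (fun a b => by simpa using le_total b a) (List.ofFn b)
  simpa using this

theorem kthHighest_card_ge (hk1 : 1 ≤ k) (hkn : k ≤ n) :
    k ≤ (Finset.univ.filter fun j => kthHighest b k ≤ b j).card := by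
  classical
  obtain ⟨s, hs, hperm, hsort, hlen⟩ := sL_props b
  have hkl : k - 1 < s.length := by omega
  have hp : kthHighest b k = s[k-1] := by
    rw [kthHighest, ← hs]; exact List.getD_eq_getElem s 0 hkl
  have hcount : k ≤ s.countP (fun x => decide (s[k-1] ≤ x)) := by
    apply countP_ge_of_prefix _ _ k (by omega)
    intro i h2 hik
    simp only [decide_eq_true_eq]
    exact sorted_desc_getElem s hsort (by omega) hkl
  rw [hperm.countP_eq, countP_ofFn'] at hcount
  simpa only [hp, decide_eq_true_eq] using hcount

theorem kthHighest_card_gt (hk1 : 1 ≤ k) (hkn : k ≤ n) :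
    (Finset.univ.filter fun j => kthHighest b k < b j).card ≤ k - 1 := by
  classical
  obtain ⟨s, hs, hperm, hsort, hlen⟩ := sL_props b
  have hkl : k - 1 < s.length := by omega
  have hp : kthHighest b k = s[k-1] := by
    rw [kthHighest, ← hs]; exact List.getD_eq_getElem s 0 hkl
  have hcount : s.countP (fun x => decide (s[k-1] < x)) ≤ k - 1 := by
    apply countP_le_of_suffix
    intro i h2 hik
    simp only [decide_eq_false_iff_not, not_lt]
    exact sorted_desc_getElem s hsort hik h2
  rw [hperm.countP_eq, countP_ofFn'] at hcount
  simpa only [hp, decide_eq_true_eq] using hcount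

theorem kthHighest_le_of_card (hk1 : 1 ≤ k) (hkn : k ≤ n) (x : ℝ)
    (h : (Finset.univ.filter fun j => x < b j).card ≤ k - 1) : kthHighest b k ≤ x := by
  classical
  obtain ⟨s, hs, hperm, hsort, hlen⟩ := sL_props b
  have hkl : k - 1 < s.length := by omega
  have hp : kthHighest b k = s[k-1] := by
    rw [kthHighest, ← hs]; exact List.getD_eq_getElem s 0 hkl
  by_contra hc
  push_neg at hc
  rw [hp] at hc
  have hcount : k ≤ s.countP (fun y => decide (x < y)) := by
    apply countP_ge_of_prefix _ _ k (by omega)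
    intro i h2 hik
    simp only [decide_eq_true_eq]
    exact lt_of_lt_of_le hc (sorted_desc_getElem s hsort (by omega) hkl)
  rw [hperm.countP_eq, countP_ofFn'] at hcount
  simp only [decide_eq_true_eq] at hcount
  omega

theorem kthHighest_mem (hk1 : 1 ≤ k) (hkn : k ≤ n) : ∃ j, b j = kthHighest b k := by
  obtain ⟨s, hs, hperm, hsort, hlen⟩ := sL_props b
  have hkl : k - 1 < s.length := by omega
  have hp : kthHighest b k = s[k-1] := by
    rw [kthHighest, ← hs]; exact List.getD_eq_getElem s 0 hkl
  rw [hp]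
  exact List.mem_ofFn.mp (hperm.subset (s.getElem_mem hkl))

end KH


theorem card_filter_lt_val (n a : ℕ) (ha : a ≤ n) :
    (Finset.univ.filter fun j : Fin n => (j:ℕ) < a).card = a := by
  rw [show (Finset.univ.filter fun j : Fin n => (j:ℕ) < a)
      = (Finset.range a).attachFin (fun m hm => lt_of_lt_of_le (Finset.mem_range.mp hm) ha) by
    ext j; simp]
  rw [Finset.card_attachFin, Finset.card_range]

theorem card_filter_ge_val (n a : ℕ) (ha : a ≤ n) :
    (Finset.univ.filter fun j : Fin n => a ≤ (j:ℕ)).card = n - a := by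
  classical
  have h := Finset.card_filter_add_card_filter_not
    (s := (Finset.univ : Finset (Fin n))) (p := fun j : Fin n => (j:ℕ) < a)
  rw [Finset.card_univ, Fintype.card_fin, card_filter_lt_val n a ha] at h
  have : (Finset.univ.filter fun j : Fin n => ¬ (j:ℕ) < a)
      = (Finset.univ.filter fun j : Fin n => a ≤ (j:ℕ)) := by
    apply Finset.filter_congr; intro j _; simp
  rw [this] at h
  omega


theorem stmt7 {n : ℕ} (hn : 2 ≤ n) (v : Fin n → ℝ) (hv : StrictAnti v) (hvpos : ∀ i, 0 < v i) (k : ℕ) (hk3 : 3 ≤ k) (hkn : k ≤ n)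
    (b : Fin n → ℝ) (hb : NashEq v k b) (i : Fin n) (hw : wins b i) :
    vIdx v (n + 3 - k) < v i := by
  classical
  by_contra hcon
  push_neg at hcon
  set m : Fin n := ⟨n + 2 - k, by omega⟩ with hm
  have hvIdx : vIdx v (n + 3 - k) = v m := by
    rw [vIdx, dif_pos (by omega : 1 ≤ n + 3 - k ∧ n + 3 - k ≤ n)]
    congr 1
    exact Fin.ext (by simp [hm]; omega)
  rw [hvIdx] at hcon  -- v i ≤ v m
  have him : (m : ℕ) ≤ (i : ℕ) := by
    by_contra h
    push_neg at h
    exact absurd (hv (show i < m from h)) (not_lt.mpr hcon)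
  set p := price k b with hp
  have hpk : p = kthHighest b k := if_neg (by omega)
  have hui : utility v k b i = v i - p := by rw [utility, if_pos hw]
  -- Step 1: p ≤ v i
  have hpvi : p ≤ v i := by
    by_contra hpi
    push_neg at hpi
    have hdev := hb.2 i 0 le_rfl
    rw [hui] at hdev
    set b0 := Function.update b i 0 with hb0
    by_cases hw0 : wins b0 i
    · have hz : ∀ l, b0 l = 0 := by
        intro l
        have h1 : b0 l ≤ b0 i := hw0.1 l
        have h2 : b0 i = 0 := Function.update_self i 0 b
        have h3 : 0 ≤ b0 l := by
          rcases eq_or_ne l i with rfl | hl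
          · rw [h2]
          · rw [hb0, Function.update_of_ne hl]; exact hb.1 l
        linarith [h2 ▸ h1]
      have hpr0 : price k b0 = 0 := by
        rw [price, if_neg (by omega : ¬ k = n + 1)]
        obtain ⟨j, hj⟩ := kthHighest_mem b0 (by omega : 1 ≤ k) hkn
        rw [← hj, hz j]
      rw [utility, if_pos hw0, hpr0] at hdev
      linarith [hvpos i]
    · rw [utility, if_neg hw0] at hdev
      linarith
  have hpvm : p ≤ v m := le_trans hpvi (hv.antitone him)
  -- counting sets
  set A := Finset.univ.filter (fun j => p ≤ b j) with hA
  set T := Finset.univ.filter (fun j => p < b j) with hT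
  set Bs := Finset.univ.filter (fun j => v j ≤ p) with hBs
  set C := Finset.univ.filter (fun j : Fin n => (m:ℕ) ≤ (j:ℕ)) with hC
  have hAcard : k ≤ A.card := by
    have := kthHighest_card_ge b (by omega : 1 ≤ k) hkn
    rwa [← hpk] at this
  have hTcard : T.card ≤ k - 1 := by
    have := kthHighest_card_gt b (by omega : 1 ≤ k) hkn
    rwa [← hpk] at this
  have hCcard : C.card = k - 2 := by
    rw [hC]
    have := card_filter_ge_val n (n + 2 - k) (by omega)
    simp only [hm] at *
    rw [this]
    omega
  have hBsub : Bs ⊆ C := by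
    intro j hj
    rw [hBs, Finset.mem_filter] at hj
    rw [hC, Finset.mem_filter]
    refine ⟨Finset.mem_univ _, ?_⟩
    have : v j ≤ v m := le_trans hj.2 hpvm
    exact (hv.le_iff_ge.mp this : m ≤ j)
  have hBcard : Bs.card ≤ k - 2 := hCcard ▸ Finset.card_le_card hBsub
  -- find deviator
  have key : ∃ j : Fin n, j ≠ i ∧ p < v j ∧ p ≤ b j ∧
      (Finset.univ.filter fun l => l ≠ j ∧ p < b l).card ≤ k - 2 := by
    by_cases ht : T.card ≤ k - 2
    · have h2 : 2 ≤ (A \ Bs).card := by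
        have := Finset.le_card_sdiff Bs A
        omega
      have h1 : 1 ≤ ((A \ Bs) \ {i}).card := by
        have := Finset.le_card_sdiff ({i} : Finset (Fin n)) (A \ Bs)
        simp only [Finset.card_singleton] at this
        omega
      obtain ⟨j, hj⟩ := Finset.card_pos.mp (show 0 < ((A \ Bs) \ {i}).card by omega)
      rw [Finset.mem_sdiff, Finset.mem_sdiff, Finset.mem_singleton] at hj
      obtain ⟨⟨hjA, hjB⟩, hji⟩ := hj
      rw [hA, Finset.mem_filter] at hjA
      rw [hBs, Finset.mem_filter] at hjB
      refine ⟨j, hji, by push_neg at hjB; exact hjB (Finset.mem_univ _), hjA.2, ?_⟩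
      refine le_trans (Finset.card_le_card ?_) ht
      intro l hl
      rw [Finset.mem_filter] at hl
      rw [hT, Finset.mem_filter]
      exact ⟨Finset.mem_univ _, hl.2.2⟩
    · have htk : T.card = k - 1 := by omega
      have hiT : i ∈ T := by
        have hTne : T.Nonempty := Finset.card_pos.mp (by omega)
        obtain ⟨l, hl⟩ := hTne
        rw [hT, Finset.mem_filter] at hl
        rw [hT, Finset.mem_filter]
        exact ⟨Finset.mem_univ _, lt_of_lt_of_le hl.2 (hw.1 l)⟩
      by_cases hex : ∃ j ∈ T, j ≠ i ∧ p < v j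
      · obtain ⟨j, hjT, hji, hpvj⟩ := hex
        have hjT' := hjT
        rw [hT, Finset.mem_filter] at hjT'
        refine ⟨j, hji, hpvj, le_of_lt hjT'.2, ?_⟩
        have heq : (Finset.univ.filter fun l => l ≠ j ∧ p < b l) = T.erase j := by
          ext l
          rw [Finset.mem_filter, Finset.mem_erase, hT, Finset.mem_filter]
          tauto
        rw [heq, Finset.card_erase_of_mem hjT]
        omega
      · exfalso
        push_neg at hex
        have hsub : T.erase i ⊆ Bs := by
          intro l hl
          rw [Finset.mem_erase] at hl
          rw [hBs, Finset.mem_filter]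
          exact ⟨Finset.mem_univ _, hex l hl.2 hl.1⟩
        have hEcard : (T.erase i).card = k - 2 := by
          rw [Finset.card_erase_of_mem hiT]; omega
        have hBC : T.erase i ⊆ C := le_trans hsub hBsub
        have hEq : T.erase i = C :=
          Finset.eq_of_subset_of_card_le hBC (by omega)
        have hiC : i ∈ C := by
          rw [hC, Finset.mem_filter]; exact ⟨Finset.mem_univ _, him⟩
        rw [← hEq, Finset.mem_erase] at hiC
        exact hiC.1 rfl
  obtain ⟨j, hji, hpvj, hpbj, hcnt⟩ := key
  -- j is not the winner, so utility 0
  have hnw : ¬ wins b j := by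
    intro hwj
    have h1 : b j = b i := le_antisymm (hw.1 j) (hwj.1 i)
    have h2 : i ≤ j := hw.2 j h1
    have h3 : j ≤ i := hwj.2 i h1.symm
    exact hji (le_antisymm h3 h2)
  have hu0 : utility v k b j = 0 := by rw [utility, if_neg hnw]
  -- deviation
  set B : ℝ := b i + 1 with hBdef
  have hB0 : 0 ≤ B := by have := hb.1 i; rw [hBdef]; linarith
  set b' := Function.update b j B with hb'
  have hbj' : b' j = B := Function.update_self j B b
  have hbl' : ∀ l, l ≠ j → b' l = b l := fun l hl => Function.update_of_ne hl B b
  have hwj' : wins b' j := by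
    constructor
    · intro l
      rcases eq_or_ne l j with rfl | hl
      · exact le_refl _
      · rw [hbl' l hl, hbj', hBdef]
        linarith [hw.1 l]
    · intro l hl
      rcases eq_or_ne l j with rfl | hne
      · exact le_refl _
      · exfalso
        rw [hbl' l hne, hbj', hBdef] at hl
        linarith [hw.1 l]
  have hcnt' : (Finset.univ.filter fun l => p < b' l).card ≤ k - 1 := by
    have hsub : (Finset.univ.filter fun l => p < b' l)
        ⊆ insert j (Finset.univ.filter fun l => l ≠ j ∧ p < b l) := by
      intro l hl
      rw [Finset.mem_filter] at hl
      rcases eq_or_ne l j with rfl | hne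
      · exact Finset.mem_insert_self _ _
      · refine Finset.mem_insert_of_mem ?_
        rw [Finset.mem_filter]
        rw [hbl' l hne] at hl
        exact ⟨Finset.mem_univ _, hne, hl.2⟩
    have := Finset.card_le_card hsub
    have h2 := Finset.card_insert_le j (Finset.univ.filter fun l => l ≠ j ∧ p < b l)
    omega
  have hq : kthHighest b' k ≤ p := kthHighest_le_of_card b' (by omega) hkn p hcnt'
  have hpr' : price k b' = kthHighest b' k := if_neg (by omega)
  have hdev := hb.2 j B hB0
  rw [← hb', hu0, utility, if_pos hwj', hpr'] at hdev
  linarith
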